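/- Let H be a Hopf algebra over a field k, M a right H-module and right H-comodule, and q : M → ker ε a map which is right H-linear with respect to the right adjoint action of H on ker ε (q(xh) = S(h₍₁₎) q(x) h₍₂₎) and right H-colinear with respect to the coaction Δ̃(h) = h₍₁₎ ⊗ h₍₂₎ − 1 ⊗ h on ker ε. Then τ(x ⊗ y) := y₍₀₎ ⊗ x y₍₁₎ and x ◁ y := x q(y) turn M into a braided Leibniz algebra, i.e., (x ◁ y) ◁ z = x ◁ (y ◁ z) + (x ◁ z⟨1⟩) ◁ y⟨2⟩ for all x, y, z ∈ M, where τ(y ⊗ z) = z⟨1⟩ ⊗ y⟨2⟩. -/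

import Mathlib

open TensorProduct LinearMap

/-- The right adjoint action `g ⊗ h ↦ S(h₍₁₎) g h₍₂₎` of a Hopf algebra on itself. -/
noncomputable def adAct (k H : Type) [Field k] [Ring H] [HopfAlgebra k H] :
    H ⊗[k] H →ₗ[k] H :=
  (LinearMap.mul' k H)
  ∘ₗ (rTensor H ((LinearMap.mul' k H) ∘ₗ (TensorProduct.comm k H H).toLinearMap))
  ∘ₗ (TensorProduct.assoc k H H H).symm.toLinearMap
  ∘ₗ (lTensor H (rTensor H (HopfAlgebra.antipode (R := k))))
  ∘ₗ (lTensor H (Coalgebra.comul (R := k)))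

section Aux
variable (k H : Type) [Field k] [Ring H] [HopfAlgebra k H]

lemma adAct_tmul (a g : H) (r : Coalgebra.Repr k g (H × H)) :
    adAct k H (a ⊗ₜ[k] g)
      = ∑ i ∈ r.index, HopfAlgebra.antipode (R := k) (r.left i) * a * r.right i := by
  simp only [adAct, LinearMap.comp_apply, lTensor_tmul, ← r.eq, tmul_sum, map_sum,
    rTensor_tmul, LinearEquiv.coe_coe, TensorProduct.assoc_symm_tmul,
    TensorProduct.comm_tmul, mul'_apply, mul_assoc]

lemma key (a g : H) :
    LinearMap.mul' k H ((lTensor H (adAct k H ∘ₗ TensorProduct.mk k H H a))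
      (Coalgebra.comul (R := k) g)) = a * g := by
  classical
  set r := Coalgebra.Repr.arbitrary k g with hr
  set a₁ : (i : H × H) → Coalgebra.Repr k (r.left i) (H × H) := fun i => Coalgebra.Repr.arbitrary k _
  set a₂ : (i : H × H) → Coalgebra.Repr k (r.right i) (H × H) := fun i => Coalgebra.Repr.arbitrary k _
  have hco := Coalgebra.sum_tmul_tmul_eq r a₁ a₂
  -- the trilinear evaluation map  b ⊗ (c ⊗ d) ↦ b * (S c * a * d)
  set F : H ⊗[k] (H ⊗[k] H) →ₗ[k] H :=
    LinearMap.mul' k H ∘ₗ lTensor H (LinearMap.mul' k H ∘ₗ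
      rTensor H ((LinearMap.mulRight k a) ∘ₗ (HopfAlgebra.antipode (R := k)))) with hF
  have hFt : ∀ b c d : H, F (b ⊗ₜ (c ⊗ₜ d)) =
      b * (HopfAlgebra.antipode (R := k) c * a * d) := by
    intro b c d
    simp [hF, mul_assoc]
  have h1 := congrArg F hco
  simp only [map_sum, hFt] at h1
  -- RHS of h1 is our LHS
  have hL : LinearMap.mul' k H ((lTensor H (adAct k H ∘ₗ TensorProduct.mk k H H a))
      (Coalgebra.comul (R := k) g))
      = ∑ i ∈ r.index, ∑ j ∈ (a₂ i).index,
          r.left i * (HopfAlgebra.antipode (R := k) ((a₂ i).left j) * a * (a₂ i).right j) := by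
    rw [← r.eq]
    simp only [map_sum, lTensor_tmul, LinearMap.comp_apply, TensorProduct.mk_apply,
      mul'_apply]
    refine Finset.sum_congr rfl fun i _ => ?_
    rw [adAct_tmul k H a (r.right i) (a₂ i), Finset.mul_sum]
  rw [hL, ← h1]
  -- now compute the left sum
  have h2 : ∀ i ∈ r.index, ∑ j ∈ (a₁ i).index,
      (a₁ i).left j * (HopfAlgebra.antipode (R := k) ((a₁ i).right j) * a * r.right i)
      = Coalgebra.counit (R := k) (r.left i) • (a * r.right i) := by
    intro i _
    have := HopfAlgebra.sum_mul_antipode_eq_smul (R := k) (a₁ i)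
    calc ∑ j ∈ (a₁ i).index,
        (a₁ i).left j * (HopfAlgebra.antipode (R := k) ((a₁ i).right j) * a * r.right i)
        = (∑ j ∈ (a₁ i).index, (a₁ i).left j * HopfAlgebra.antipode (R := k) ((a₁ i).right j))
            * (a * r.right i) := by
          rw [Finset.sum_mul]; exact Finset.sum_congr rfl fun j _ => by simp only [mul_assoc]
      _ = Coalgebra.counit (R := k) (r.left i) • (a * r.right i) := by
          rw [this, smul_mul_assoc, one_mul]
  rw [Finset.sum_congr rfl h2]
  have h3 : ∑ i ∈ r.index, Coalgebra.counit (R := k) (r.left i) • r.right i = g := by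
    have := Coalgebra.sum_counit_tmul_eq (R := k) r
    have := congrArg (TensorProduct.lid k H) this
    simp only [map_sum, TensorProduct.lid_tmul] at this
    simpa using this
  calc ∑ i ∈ r.index, Coalgebra.counit (R := k) (r.left i) • (a * r.right i)
      = a * ∑ i ∈ r.index, Coalgebra.counit (R := k) (r.left i) • r.right i := by
        rw [Finset.mul_sum]; exact Finset.sum_congr rfl fun i _ => (mul_smul_comm _ _ _).symm
    _ = a * g := by rw [h3]

end Aux

/-- Let `H` be a Hopf algebra, `M` a right `H`-module and right
`H`-comodule, and `q : M → ker ε` a map which is `H`-linear for the right adjoint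
action of `H` on `ker ε` (`q(xh) = S(h₍₁₎) q(x) h₍₂₎`) and `H`-colinear for the
coaction `Δ̃(h) = h₍₁₎ ⊗ h₍₂₎ − 1 ⊗ h` on `ker ε`.  Then `τ(x ⊗ y) = y₍₀₎ ⊗ x y₍₁₎`
and `x ◁ y := x q(y)` make `M` a braided Leibniz algebra:
`(x ◁ y) ◁ z = x ◁ (y ◁ z) + (x ◁ z⟨1⟩) ◁ y⟨2⟩`. -/
theorem stmt15 (k H M : Type) [Field k] [Ring H] [HopfAlgebra k H]
    [AddCommGroup M] [Module k M]
    (act : M ⊗[k] H →ₗ[k] M) (ρ : M →ₗ[k] M ⊗[k] H)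
    -- M is a right H-module
    (hact_one : ∀ m : M, act (m ⊗ₜ (1 : H)) = m)
    (hact_mul : ∀ (m : M) (a b : H),
      act (act (m ⊗ₜ a) ⊗ₜ b) = act (m ⊗ₜ (a * b)))
    -- M is a right H-comodule
    (hcounit : ∀ m : M,
      (TensorProduct.rid k M) ((lTensor M (Coalgebra.counit (R := k))) (ρ m)) = m)
    (hcoassoc : ∀ m : M,
      (TensorProduct.assoc k M H H) ((rTensor H ρ) (ρ m))
        = (lTensor M (Coalgebra.comul (R := k))) (ρ m))
    -- q takes values in ker ε
    (q : M →ₗ[k] H)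
    (hq_ker : ∀ x : M, Coalgebra.counit (R := k) (q x) = 0)
    -- q is H-linear for the right adjoint action on ker ε
    (hq_lin : ∀ (x : M) (h : H), q (act (x ⊗ₜ h)) = adAct k H (q x ⊗ₜ h))
    -- q is H-colinear for the coaction Δ̃ on ker ε
    (hq_colin : ∀ x : M,
      Coalgebra.comul (R := k) (q x) - (1 : H) ⊗ₜ[k] q x = (rTensor H q) (ρ x)) :
    ∀ x y z : M,
      act (act (x ⊗ₜ q y) ⊗ₜ q z)
        = act (x ⊗ₜ q (act (y ⊗ₜ q z)))
          + (act ∘ₗ TensorProduct.map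
              ((act ∘ₗ (TensorProduct.mk k M H) x) ∘ₗ q)
              (q ∘ₗ act ∘ₗ (TensorProduct.mk k M H) y)) (ρ z) := by
  intro x y z
  classical
  obtain ⟨S, hS⟩ := TensorProduct.exists_finset (ρ z)
  -- comul (q z) = 1 ⊗ q z + ∑ q(m) ⊗ h
  have hcom : Coalgebra.comul (R := k) (q z)
      = (1 : H) ⊗ₜ[k] q z + ∑ p ∈ S, q p.1 ⊗ₜ[k] p.2 := by
    have := hq_colin z
    rw [hS, map_sum] at this
    simp only [rTensor_tmul] at this
    rw [← this]; abel
  -- the key identity evaluated at q z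
  have hkey := key k H (q y) (q z)
  rw [hcom, map_add, map_add, map_sum, map_sum] at hkey
  simp only [lTensor_tmul, LinearMap.comp_apply, TensorProduct.mk_apply, mul'_apply,
    one_mul] at hkey
  -- hkey : adAct (q y ⊗ q z) + ∑ q p.1 * adAct (q y ⊗ p.2) = q y * q z
  rw [hact_mul, ← hkey]
  rw [hq_lin y (q z)]
  rw [hS]
  simp only [map_sum, LinearMap.comp_apply, TensorProduct.map_tmul, TensorProduct.mk_apply]
  rw [tmul_add, map_add]
  congr 1
  rw [tmul_sum, map_sum]
  refine Finset.sum_congr rfl fun p _ => ?_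
  rw [hq_lin y p.2, hact_mul]
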